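/- arXiv:2105.02395 — 6 statements merged into one kernel-verified Lean document; each statement's English description precedes it below -/
import Mathlib

section
/- For all real numbers x, y with y > 0 and all reference values x₀ ∈ ℝ, y₀ > 0, the inequality log(1 + x²/y) ≥ -(x₀²/(y₀(y₀ + x₀²)))·(y + x²) + (2/y₀)·x₀·x + log(1 + x₀²/y₀) - x₀²/y₀ holds, with equality when (x, y) = (x₀, y₀). -/
/-- Scalar minorizer of the rate function `log (1 + x²/y)` at a reference
point `(x₀, y₀)`, together with equality at the reference point. -/
theorem stmt_0 (x y x₀ y₀ : ℝ) (hy : 0 < y) (hy₀ : 0 < y₀) :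
    (Real.log (1 + x ^ 2 / y) ≥
      -(x₀ ^ 2 / (y₀ * (y₀ + x₀ ^ 2))) * (y + x ^ 2) + (2 / y₀) * x₀ * x +
        Real.log (1 + x₀ ^ 2 / y₀) - x₀ ^ 2 / y₀) ∧
    (Real.log (1 + x₀ ^ 2 / y₀) =
      -(x₀ ^ 2 / (y₀ * (y₀ + x₀ ^ 2))) * (y₀ + x₀ ^ 2) + (2 / y₀) * x₀ * x₀ +
        Real.log (1 + x₀ ^ 2 / y₀) - x₀ ^ 2 / y₀) := by
  have hT : 0 < y + x ^ 2 := by positivity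
  have hT₀ : 0 < y₀ + x₀ ^ 2 := by positivity
  constructor
  · -- inequality
    have h1 : 0 < 1 + x ^ 2 / y := by positivity
    have h1₀ : 0 < 1 + x₀ ^ 2 / y₀ := by positivity
    have hratio : 0 < (1 + x₀ ^ 2 / y₀) / (1 + x ^ 2 / y) := by positivity
    have hlog := Real.log_le_sub_one_of_pos hratio
    rw [Real.log_div (ne_of_gt h1₀) (ne_of_gt h1)] at hlog
    have hratio_eq : (1 + x₀ ^ 2 / y₀) / (1 + x ^ 2 / y)
        = (y₀ + x₀ ^ 2) * y / (y₀ * (y + x ^ 2)) := by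
      field_simp
    rw [hratio_eq] at hlog
    -- The residual is an exact square over a positive denominator.
    have hid : -(-(x₀ ^ 2 / (y₀ * (y₀ + x₀ ^ 2))) * (y + x ^ 2) + (2 / y₀) * x₀ * x
          - x₀ ^ 2 / y₀)
        - ((y₀ + x₀ ^ 2) * y / (y₀ * (y + x ^ 2)) - 1)
        = (x₀ * (y + x ^ 2) - x * (y₀ + x₀ ^ 2)) ^ 2
            / (y₀ * (y₀ + x₀ ^ 2) * (y + x ^ 2)) := by
      field_simp
      ring
    have hnn : 0 ≤ (x₀ * (y + x ^ 2) - x * (y₀ + x₀ ^ 2)) ^ 2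
        / (y₀ * (y₀ + x₀ ^ 2) * (y + x ^ 2)) := by positivity
    linarith
  · -- equality at the reference point
    field_simp
    ring
end

section
/- For all complex numbers x and real y > 0, and reference values x₀ ∈ ℂ, y₀ > 0: log(1 + |x|²/y) ≥ -(|x₀|²/(y₀(y₀ + |x₀|²)))·(y + |x|²) + (2/y₀)·Re(conj(x₀)·x) + log(1 + |x₀|²/y₀) - |x₀|²/y₀. -/
/-- Quadratic minorizer of the complex SINR-rate function `log (1 + |x|²/y)`. -/
theorem stmt_1 (x x₀ : ℂ) (y y₀ : ℝ) (hy : 0 < y) (hy₀ : 0 < y₀) :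
    Real.log (1 + ‖x‖ ^ 2 / y) ≥
      -(‖x₀‖ ^ 2 / (y₀ * (y₀ + ‖x₀‖ ^ 2))) * (y + ‖x‖ ^ 2) +
        (2 / y₀) * ((starRingEnd ℂ) x₀ * x).re +
        Real.log (1 + ‖x₀‖ ^ 2 / y₀) - ‖x₀‖ ^ 2 / y₀ := by
  set r := ‖x‖ with hrdef
  set a := ‖x₀‖ with hadef
  have hr : 0 ≤ r := norm_nonneg x
  have ha : 0 ≤ a := norm_nonneg x₀
  have hs : 0 < y + r ^ 2 := by positivity
  have hs₀ : 0 < y₀ + a ^ 2 := by positivity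
  have hc : ((starRingEnd ℂ) x₀ * x).re ≤ a * r := by
    calc ((starRingEnd ℂ) x₀ * x).re ≤ ‖(starRingEnd ℂ) x₀ * x‖ :=
          Complex.re_le_norm _
      _ = a * r := by rw [norm_mul, Complex.norm_conj]
  set c := ((starRingEnd ℂ) x₀ * x).re with hcdef
  have key : Real.log (1 + r ^ 2 / y) - Real.log (1 + a ^ 2 / y₀) ≥
      1 - y * (y₀ + a ^ 2) / ((y + r ^ 2) * y₀) := by
    have h1 : (1 : ℝ) + r ^ 2 / y = (y + r ^ 2) / y := by field_simp
    have h2 : (1 : ℝ) + a ^ 2 / y₀ = (y₀ + a ^ 2) / y₀ := by field_simp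
    rw [h1, h2, Real.log_div hs.ne' hy.ne', Real.log_div hs₀.ne' hy₀.ne']
    have ht : 0 < y * (y₀ + a ^ 2) / ((y + r ^ 2) * y₀) := by positivity
    have hle := Real.log_le_sub_one_of_pos ht
    rw [Real.log_div (by positivity) (by positivity),
      Real.log_mul hy.ne' hs₀.ne', Real.log_mul hs.ne' hy₀.ne'] at hle
    linarith
  have hpoly : y₀ * (y + r ^ 2) * (y₀ + a ^ 2) - y * (y₀ + a ^ 2) ^ 2 + a ^ 2 * (y + r ^ 2) ^ 2
      - 2 * c * (y + r ^ 2) * (y₀ + a ^ 2) + a ^ 2 * (y + r ^ 2) * (y₀ + a ^ 2) ≥ 0 := by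
    nlinarith [sq_nonneg ((y₀ + a ^ 2) * r - a * (y + r ^ 2)),
      mul_nonneg (mul_nonneg (sub_nonneg.2 hc) hs.le) hs₀.le]
  have hfinal : -(a ^ 2 / (y₀ * (y₀ + a ^ 2))) * (y + r ^ 2) + (2 / y₀) * c - a ^ 2 / y₀ ≤
      1 - y * (y₀ + a ^ 2) / ((y + r ^ 2) * y₀) := by
    rw [← sub_nonneg]
    have heq : 1 - y * (y₀ + a ^ 2) / ((y + r ^ 2) * y₀) -
        (-(a ^ 2 / (y₀ * (y₀ + a ^ 2))) * (y + r ^ 2) + (2 / y₀) * c - a ^ 2 / y₀) =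
        (y₀ * (y + r ^ 2) * (y₀ + a ^ 2) - y * (y₀ + a ^ 2) ^ 2 + a ^ 2 * (y + r ^ 2) ^ 2
          - 2 * c * (y + r ^ 2) * (y₀ + a ^ 2) + a ^ 2 * (y + r ^ 2) * (y₀ + a ^ 2)) /
          (y₀ * (y + r ^ 2) * (y₀ + a ^ 2)) := by
      field_simp
      ring
    rw [heq]
    exact div_nonneg hpoly (by positivity)
  linarith
end

section
/- Let X, X₀ ∈ ℂ^{M×N} and Y, Y₀ ∈ ℂ^{M×M} Hermitian positive definite. Then log det(I + XᴴY⁻¹X) ≥ -tr((Y₀ + X₀X₀ᴴ)⁻¹ X₀ (I + X₀ᴴY₀⁻¹X₀) X₀ᴴ (Y₀ + X₀X₀ᴴ)⁻¹ (Y + XXᴴ)) + 2·Re(tr((I + X₀ᴴY₀⁻¹X₀) X₀ᴴ (Y₀ + X₀X₀ᴴ)⁻¹ X)) + log det(I + X₀ᴴY₀⁻¹X₀) - tr(X₀ᴴY₀⁻¹X₀), with equality at (X, Y) = (X₀, Y₀). -/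
open Matrix
open scoped ComplexOrder

open scoped MatrixOrder in
noncomputable def Matrix.PosSemidef.sqrt {k : ℕ} {A : Matrix (Fin k) (Fin k) ℂ}
    (_hA : A.PosSemidef) : Matrix (Fin k) (Fin k) ℂ := CFC.sqrt A

open scoped MatrixOrder in
lemma Matrix.PosSemidef.sqrt_mul_self {k : ℕ} {A : Matrix (Fin k) (Fin k) ℂ}
    (hA : A.PosSemidef) : hA.sqrt * hA.sqrt = A :=
  CFC.sqrt_mul_sqrt_self A hA.nonneg

open scoped MatrixOrder in
lemma Matrix.PosSemidef.posSemidef_sqrt {k : ℕ} {A : Matrix (Fin k) (Fin k) ℂ}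
    (hA : A.PosSemidef) : hA.sqrt.PosSemidef :=
  (CFC.sqrt_nonneg A).posSemidef

section helpers
variable {k : ℕ}

lemma myPosDefConj {A B : Matrix (Fin k) (Fin k) ℂ} (hA : A.PosDef) (hB : IsUnit B) :
    (Bᴴ * A * B).PosDef := by
  exact Matrix.PosDef.conjTranspose_mul_mul_same hA (Matrix.mulVec_injective_iff_isUnit.mpr hB)

lemma myTraceEig {A : Matrix (Fin k) (Fin k) ℂ} (hA : A.IsHermitian) :
    A.trace = ∑ i, (hA.eigenvalues i : ℂ) := by
  conv_lhs => rw [hA.spectral_theorem]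
  rw [Unitary.conjStarAlgAut_apply]
  rw [Matrix.trace_mul_cycle]
  have : (star hA.eigenvectorUnitary.1 : Matrix (Fin k) (Fin k) ℂ) * hA.eigenvectorUnitary.1 = 1 := by
    simpa using hA.eigenvectorUnitary.2.1
  rw [this, one_mul, Matrix.trace_diagonal]
  simp

lemma myDetRe {A : Matrix (Fin k) (Fin k) ℂ} (hA : A.PosDef) :
    A.det = ((∏ i, hA.1.eigenvalues i : ℝ) : ℂ) ∧ 0 < A.det.re ∧ A.det.im = 0 := by
  have h : A.det = ((∏ i, hA.1.eigenvalues i : ℝ) : ℂ) := by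
    rw [hA.1.det_eq_prod_eigenvalues]; push_cast; rfl
  refine ⟨h, ?_, ?_⟩ <;> rw [h]
  · rw [Complex.ofReal_re]
    exact Finset.prod_pos fun i _ => hA.eigenvalues_pos i
  · rw [Complex.ofReal_im]

lemma myLogDetLeTrace {A : Matrix (Fin k) (Fin k) ℂ} (hA : A.PosDef) :
    Real.log A.det.re ≤ A.trace.re - k := by
  have hdet : A.det.re = ∏ i, hA.1.eigenvalues i := by
    rw [(myDetRe hA).1, Complex.ofReal_re]
  have htr : A.trace.re = ∑ i, hA.1.eigenvalues i := by
    rw [myTraceEig hA.1]; push_cast; simp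
  rw [hdet, htr, Real.log_prod (fun i _ => (hA.eigenvalues_pos i).ne')]
  calc ∑ i, Real.log (hA.1.eigenvalues i)
      ≤ ∑ i, (hA.1.eigenvalues i - 1) :=
        Finset.sum_le_sum fun i _ => Real.log_le_sub_one_of_pos (hA.eigenvalues_pos i)
    _ = (∑ i, hA.1.eigenvalues i) - k := by
        rw [Finset.sum_sub_distrib]; simp

lemma myTraceNonneg {A : Matrix (Fin k) (Fin k) ℂ} (hA : A.PosSemidef) :
    0 ≤ A.trace.re ∧ A.trace.im = 0 := by
  have h : ∀ i, 0 ≤ A i i := fun i => by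
    exact hA.diag_nonneg
  have : (0:ℂ) ≤ A.trace := Finset.sum_nonneg fun i _ => h i
  exact ⟨(Complex.le_def.mp this).1, ((Complex.le_def.mp this).2).symm⟩

lemma myTraceMulNonneg {A B : Matrix (Fin k) (Fin k) ℂ} (hA : A.PosSemidef) (hB : B.PosSemidef) :
    0 ≤ (A * B).trace.re := by
  have h1 : (A * B).trace = (hA.sqrt * B * hA.sqrt).trace := by
    conv_lhs => rw [← hA.sqrt_mul_self]
    rw [Matrix.mul_assoc, Matrix.trace_mul_cycle, ← Matrix.mul_assoc]
  have h2 : (hA.sqrt * B * hA.sqrt).PosSemidef := by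
    have := hB.mul_mul_conjTranspose_same hA.sqrt
    rwa [hA.posSemidef_sqrt.isHermitian.eq] at this
  rw [h1]
  exact (myTraceNonneg h2).1
end helpers

lemma myWoodbury {m n : ℕ} (X : Matrix (Fin m) (Fin n) ℂ) {Y : Matrix (Fin m) (Fin m) ℂ}
    (hY : Y.PosDef) :
    (1 + Xᴴ * Y⁻¹ * X) * (1 - Xᴴ * (Y + X * Xᴴ)⁻¹ * X) = 1 := by
  set S := Y + X * Xᴴ with hSdef
  have hS : S.PosDef := hY.add_posSemidef (Matrix.posSemidef_self_mul_conjTranspose X)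
  have := hS.isUnit.invertible
  have := hY.isUnit.invertible
  have h1 : Y⁻¹ * S = 1 + Y⁻¹ * (X * Xᴴ) := by
    rw [hSdef, Matrix.mul_add, Matrix.inv_mul_of_invertible]
  have hA : Xᴴ * Y⁻¹ * X = Xᴴ * S⁻¹ * X + Xᴴ * Y⁻¹ * X * (Xᴴ * S⁻¹ * X) := by
    calc Xᴴ * Y⁻¹ * X = Xᴴ * (Y⁻¹ * (S * S⁻¹)) * X := by
          rw [Matrix.mul_inv_of_invertible, Matrix.mul_one]
      _ = Xᴴ * (Y⁻¹ * S) * (S⁻¹ * X) := by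
          simp only [Matrix.mul_assoc]
      _ = Xᴴ * S⁻¹ * X + Xᴴ * Y⁻¹ * X * (Xᴴ * S⁻¹ * X) := by
          rw [h1]
          simp only [Matrix.mul_add, Matrix.add_mul, Matrix.one_mul, Matrix.mul_one,
            Matrix.mul_assoc]
  calc (1 + Xᴴ * Y⁻¹ * X) * (1 - Xᴴ * S⁻¹ * X)
      = 1 + Xᴴ * Y⁻¹ * X - (Xᴴ * S⁻¹ * X + Xᴴ * Y⁻¹ * X * (Xᴴ * S⁻¹ * X)) := by
        simp only [Matrix.mul_sub, Matrix.add_mul, Matrix.one_mul, Matrix.mul_one]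
    _ = 1 := by rw [← hA]; abel

lemma myKey {M N : ℕ} (X X₀ : Matrix (Fin M) (Fin N) ℂ)
    (Y Y₀ : Matrix (Fin M) (Fin M) ℂ) (hY : Y.PosDef) (hY₀ : Y₀.PosDef) :
    Real.log ((1 + Xᴴ * Y⁻¹ * X).det).re ≥
      -(Matrix.trace ((Y₀ + X₀ * X₀ᴴ)⁻¹ * X₀ * (1 + X₀ᴴ * Y₀⁻¹ * X₀) * X₀ᴴ *
          (Y₀ + X₀ * X₀ᴴ)⁻¹ * (Y + X * Xᴴ))).re +
        2 * (Matrix.trace ((1 + X₀ᴴ * Y₀⁻¹ * X₀) * X₀ᴴ * (Y₀ + X₀ * X₀ᴴ)⁻¹ * X)).re +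
        Real.log ((1 + X₀ᴴ * Y₀⁻¹ * X₀).det).re -
        (Matrix.trace (X₀ᴴ * Y₀⁻¹ * X₀)).re := by
  have hWood := myWoodbury X hY
  set S := Y + X * Xᴴ with hSdef
  set S₀ := Y₀ + X₀ * X₀ᴴ with hS₀def
  set W := 1 + X₀ᴴ * Y₀⁻¹ * X₀ with hWdef
  set F := 1 + Xᴴ * Y⁻¹ * X with hFdef
  have hS : S.PosDef := hY.add_posSemidef (Matrix.posSemidef_self_mul_conjTranspose X)
  have hS₀ : S₀.PosDef := hY₀.add_posSemidef (Matrix.posSemidef_self_mul_conjTranspose X₀)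
  have hW : W.PosDef := Matrix.PosDef.add_posSemidef Matrix.PosDef.one
    ((hY₀.inv.posSemidef).conjTranspose_mul_mul_same X₀)
  have hF : F.PosDef := Matrix.PosDef.add_posSemidef Matrix.PosDef.one
    ((hY.inv.posSemidef).conjTranspose_mul_mul_same X)
  have := hS.isUnit.invertible
  have := hS₀.isUnit.invertible
  set U := S₀⁻¹ * X₀ with hUdef
  have hU : Uᴴ = X₀ᴴ * S₀⁻¹ := by
    rw [hUdef, Matrix.conjTranspose_mul, (hS₀.isHermitian.inv).eq]
  set Emin := 1 - Xᴴ * S⁻¹ * X with hEmindef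
  set E := 1 - Uᴴ * X - Xᴴ * U + Uᴴ * (S * U) with hEdef
  have hEminEq : F⁻¹ = Emin := Matrix.inv_eq_right_inv hWood
  have hEminPD : Emin.PosDef := hEminEq ▸ hF.inv
  -- trace identities
  have t1 : Matrix.trace (S₀⁻¹ * X₀ * W * X₀ᴴ * S₀⁻¹ * S) =
      Matrix.trace (W * (Uᴴ * (S * U))) := by
    rw [show S₀⁻¹ * X₀ * W * X₀ᴴ * S₀⁻¹ * S = U * (W * (Uᴴ * S)) by
      simp only [hU, Matrix.mul_assoc]; rw [hUdef, Matrix.mul_assoc]]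
    rw [Matrix.trace_mul_comm]
    congr 1
    simp only [Matrix.mul_assoc]
  have t2 : Matrix.trace (W * X₀ᴴ * S₀⁻¹ * X) = Matrix.trace (W * (Uᴴ * X)) := by
    congr 1
    simp only [hU, Matrix.mul_assoc]
  have t3 : (Matrix.trace (W * (Xᴴ * U))).re = (Matrix.trace (W * (Uᴴ * X))).re := by
    have h : (W * (Uᴴ * X))ᴴ = Xᴴ * U * W := by
      simp only [Matrix.conjTranspose_mul, Matrix.conjTranspose_conjTranspose,
        hW.isHermitian.eq, Matrix.mul_assoc]
    have : Matrix.trace (W * (Xᴴ * U)) = Matrix.trace ((W * (Uᴴ * X))ᴴ) := by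
      rw [h, Matrix.trace_mul_comm]
    rw [this, Matrix.trace_conjTranspose]
    simp
  have htrX0 : (Matrix.trace (X₀ᴴ * Y₀⁻¹ * X₀)).re = (Matrix.trace W).re - N := by
    rw [hWdef, Matrix.trace_add, Matrix.trace_one, Complex.add_re]
    simp
  -- expansion of trace (W * E)
  have hexp : (Matrix.trace (W * E)).re =
      (Matrix.trace W).re - 2 * (Matrix.trace (W * (Uᴴ * X))).re +
        (Matrix.trace (W * (Uᴴ * (S * U)))).re := by
    have : W * E = W - W * (Uᴴ * X) - W * (Xᴴ * U) + W * (Uᴴ * (S * U)) := by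
      rw [hEdef]
      simp only [Matrix.mul_sub, Matrix.mul_add, Matrix.mul_one]
    rw [this, Matrix.trace_add, Matrix.trace_sub, Matrix.trace_sub,
      Complex.add_re, Complex.sub_re, Complex.sub_re, ← t3]
    ring
  -- key1 : trace (W * Emin) ≤ trace (W * E)
  have key1 : (Matrix.trace (W * Emin)).re ≤ (Matrix.trace (W * E)).re := by
    set D := U - S⁻¹ * X with hDdef
    have hSiH : (S⁻¹ * X)ᴴ = Xᴴ * S⁻¹ := by
      rw [Matrix.conjTranspose_mul, (hS.isHermitian.inv).eq]
    have hDH : Dᴴ = Uᴴ - Xᴴ * S⁻¹ := by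
      rw [hDdef, Matrix.conjTranspose_sub, hSiH]
    have e1 : S * (S⁻¹ * X) = X := by
      rw [← Matrix.mul_assoc, Matrix.mul_inv_of_invertible, Matrix.one_mul]
    have e2 : S⁻¹ * (S * U) = U := by
      rw [← Matrix.mul_assoc, Matrix.inv_mul_of_invertible, Matrix.one_mul]
    have hEdiff : E - Emin = Dᴴ * (S * D) := by
      calc E - Emin = Uᴴ * (S * U) - Uᴴ * X - Xᴴ * U + Xᴴ * (S⁻¹ * X) := by
            rw [hEdef, hEmindef]
            simp only [Matrix.mul_assoc]
            abel
        _ = Dᴴ * (S * D) := by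
            rw [hDH, hDdef, Matrix.mul_sub S, e1, Matrix.sub_mul, Matrix.mul_sub,
              Matrix.mul_sub, Matrix.mul_assoc Xᴴ S⁻¹ (S * U), e2]
            simp only [Matrix.mul_assoc]
            abel
    have hP : (Dᴴ * (S * D)).PosSemidef := by
      have := hS.posSemidef.conjTranspose_mul_mul_same D
      rwa [Matrix.mul_assoc] at this
    have hnn : 0 ≤ (Matrix.trace (W * (E - Emin))).re := by
      rw [hEdiff]
      exact myTraceMulNonneg hW.posSemidef hP
    have : Matrix.trace (W * (E - Emin)) = Matrix.trace (W * E) - Matrix.trace (W * Emin) := by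
      rw [Matrix.mul_sub, Matrix.trace_sub]
    rw [this, Complex.sub_re] at hnn
    linarith
  -- key2
  have key2 : Real.log W.det.re - (Matrix.trace (W * Emin)).re + N ≤ Real.log F.det.re := by
    set sqW := hW.posSemidef.sqrt with hsqWdef
    have hsq : sqW * sqW = W := hW.posSemidef.sqrt_mul_self
    have hsqH : sqW.IsHermitian := hW.posSemidef.posSemidef_sqrt.isHermitian
    have hdetsq : sqW.det * sqW.det = W.det := by rw [← Matrix.det_mul, hsq]
    have hWdetne : W.det ≠ 0 := by
      intro h
      have := (myDetRe hW).2.1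
      rw [h] at this; simp at this
    have hsqUnit : IsUnit sqW := by
      rw [Matrix.isUnit_iff_isUnit_det, isUnit_iff_ne_zero]
      intro h
      rw [h, zero_mul] at hdetsq
      exact hWdetne hdetsq.symm
    have hG : (sqW * Emin * sqW).PosDef := by
      have := myPosDefConj hEminPD hsqUnit
      rwa [hsqH.eq] at this
    have htrG : (sqW * Emin * sqW).trace = (W * Emin).trace := by
      rw [← Matrix.trace_mul_cycle, Matrix.mul_assoc, hsq, Matrix.trace_mul_comm]
    have hdetG : (sqW * Emin * sqW).det = W.det * Emin.det := by
      rw [Matrix.det_mul, Matrix.det_mul]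
      calc sqW.det * Emin.det * sqW.det = sqW.det * sqW.det * Emin.det := by ring
        _ = W.det * Emin.det := by rw [hdetsq]
    have hdetGre : (sqW * Emin * sqW).det.re = W.det.re * Emin.det.re := by
      rw [hdetG, Complex.mul_re, (myDetRe hW).2.2]
      ring
    have hfe : F.det * Emin.det = 1 := by
      rw [← Matrix.det_mul, hWood, Matrix.det_one]
    have hfere : F.det.re * Emin.det.re = 1 := by
      have := congrArg Complex.re hfe
      rw [Complex.mul_re, (myDetRe hF).2.2] at this
      simpa using this
    have hEminre : Emin.det.re = (F.det.re)⁻¹ :=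
      eq_inv_of_mul_eq_one_left (by rw [mul_comm]; exact hfere)
    have hlog := myLogDetLeTrace hG
    rw [hdetGre, htrG, Real.log_mul (myDetRe hW).2.1.ne' (myDetRe hEminPD).2.1.ne',
      hEminre, Real.log_inv] at hlog
    linarith
  rw [ge_iff_le, t1, t2, htrX0]
  linarith [key1, key2, hexp]

/-- Matrix-valued minorizer of the MIMO rate function `log det(I + XᴴY⁻¹X)`,
with equality at the reference point `(X₀, Y₀)`. -/
theorem stmt_8 {M N : ℕ} (X X₀ : Matrix (Fin M) (Fin N) ℂ)
    (Y Y₀ : Matrix (Fin M) (Fin M) ℂ) (hY : Y.PosDef) (hY₀ : Y₀.PosDef) :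
    (Real.log ((1 + Xᴴ * Y⁻¹ * X).det).re ≥
      -(Matrix.trace ((Y₀ + X₀ * X₀ᴴ)⁻¹ * X₀ * (1 + X₀ᴴ * Y₀⁻¹ * X₀) * X₀ᴴ *
          (Y₀ + X₀ * X₀ᴴ)⁻¹ * (Y + X * Xᴴ))).re +
        2 * (Matrix.trace ((1 + X₀ᴴ * Y₀⁻¹ * X₀) * X₀ᴴ * (Y₀ + X₀ * X₀ᴴ)⁻¹ * X)).re +
        Real.log ((1 + X₀ᴴ * Y₀⁻¹ * X₀).det).re -
        (Matrix.trace (X₀ᴴ * Y₀⁻¹ * X₀)).re) ∧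
    (Real.log ((1 + X₀ᴴ * Y₀⁻¹ * X₀).det).re =
      -(Matrix.trace ((Y₀ + X₀ * X₀ᴴ)⁻¹ * X₀ * (1 + X₀ᴴ * Y₀⁻¹ * X₀) * X₀ᴴ *
          (Y₀ + X₀ * X₀ᴴ)⁻¹ * (Y₀ + X₀ * X₀ᴴ))).re +
        2 * (Matrix.trace ((1 + X₀ᴴ * Y₀⁻¹ * X₀) * X₀ᴴ * (Y₀ + X₀ * X₀ᴴ)⁻¹ * X₀)).re +
        Real.log ((1 + X₀ᴴ * Y₀⁻¹ * X₀).det).re -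
        (Matrix.trace (X₀ᴴ * Y₀⁻¹ * X₀)).re) := by
  refine ⟨myKey X X₀ Y Y₀ hY hY₀, ?_⟩
  have hWood := myWoodbury X₀ hY₀
  set S₀ := Y₀ + X₀ * X₀ᴴ with hS₀def
  set W := 1 + X₀ᴴ * Y₀⁻¹ * X₀ with hWdef
  have hS₀ : S₀.PosDef := hY₀.add_posSemidef (Matrix.posSemidef_self_mul_conjTranspose X₀)
  have := hS₀.isUnit.invertible
  have hkey : W * (X₀ᴴ * S₀⁻¹ * X₀) = X₀ᴴ * Y₀⁻¹ * X₀ := by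
    have h1 : W - W * (X₀ᴴ * S₀⁻¹ * X₀) = 1 := by
      rw [← hWood, Matrix.mul_sub, Matrix.mul_one]
    have h2 : W = 1 + W * (X₀ᴴ * S₀⁻¹ * X₀) := sub_eq_iff_eq_add.mp h1
    have h3 : W * (X₀ᴴ * S₀⁻¹ * X₀) = W - 1 := by
      rw [eq_sub_iff_add_eq, add_comm]
      exact h2.symm
    rw [h3, hWdef]
    abel
  have e0 : S₀⁻¹ * X₀ * W * X₀ᴴ * S₀⁻¹ * S₀ = (S₀⁻¹ * X₀) * (W * X₀ᴴ) := by
    rw [Matrix.mul_assoc (S₀⁻¹ * X₀ * W * X₀ᴴ), Matrix.inv_mul_of_invertible, Matrix.mul_one,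
      Matrix.mul_assoc]
  have htr1 : Matrix.trace (S₀⁻¹ * X₀ * W * X₀ᴴ * S₀⁻¹ * S₀) =
      Matrix.trace (W * (X₀ᴴ * S₀⁻¹ * X₀)) := by
    rw [e0, Matrix.trace_mul_comm]
    congr 1
    simp only [Matrix.mul_assoc]
  have htr2 : Matrix.trace (W * X₀ᴴ * S₀⁻¹ * X₀) = Matrix.trace (W * (X₀ᴴ * S₀⁻¹ * X₀)) := by
    congr 1
    simp only [Matrix.mul_assoc]
  rw [htr1, htr2, hkey]
  ring
end

section
/- Let Z₁, W₁ ∈ ℂ^{M×N} and Z₂, W₂ ∈ ℂ^{M×M} Hermitian positive definite. Then Z₁ᴴZ₂⁻¹Z₁ ⪰ W₁ᴴW₂⁻¹Z₁ + Z₁ᴴW₂⁻¹W₁ - W₁ᴴW₂⁻¹Z₂W₂⁻¹W₁ in the Loewner order, i.e., the difference is positive semidefinite. -/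
open Matrix
open scoped ComplexOrder

/-- Matrix quadratic-over-linear minorization:
`Z₁ᴴZ₂⁻¹Z₁ ⪰ W₁ᴴW₂⁻¹Z₁ + Z₁ᴴW₂⁻¹W₁ - W₁ᴴW₂⁻¹Z₂W₂⁻¹W₁` in the Loewner order. -/
theorem stmt_9 {M N : ℕ} (Z₁ W₁ : Matrix (Fin M) (Fin N) ℂ)
    (Z₂ W₂ : Matrix (Fin M) (Fin M) ℂ) (hZ₂ : Z₂.PosDef) (hW₂ : W₂.PosDef) :
    Matrix.PosSemidef
      (Z₁ᴴ * Z₂⁻¹ * Z₁ -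
        (W₁ᴴ * W₂⁻¹ * Z₁ + Z₁ᴴ * W₂⁻¹ * W₁ - W₁ᴴ * W₂⁻¹ * Z₂ * W₂⁻¹ * W₁)) := by
  open scoped MatrixOrder in set S := CFC.sqrt Z₂ with hSdef
  open scoped MatrixOrder in have hSH : Sᴴ = S := (CFC.sqrt_nonneg Z₂).posSemidef.1
  open scoped MatrixOrder in have hSS : S * S = Z₂ := CFC.sqrt_mul_sqrt_self Z₂ hZ₂.posSemidef.nonneg
  have hdet : IsUnit S.det := by
    have h : S.det * S.det = Z₂.det := by rw [← det_mul, hSS]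
    have hZdet : IsUnit Z₂.det := hZ₂.det_pos.ne'.isUnit
    exact isUnit_of_mul_isUnit_left (h ▸ hZdet)
  have hSinv : S⁻¹ * S = 1 := nonsing_inv_mul S hdet
  have hSinv' : S * S⁻¹ = 1 := mul_nonsing_inv S hdet
  have hSinvH : S⁻¹ᴴ = S⁻¹ := by rw [conjTranspose_nonsing_inv, hSH]
  have hZinv : Z₂⁻¹ = S⁻¹ * S⁻¹ := by rw [← hSS, Matrix.mul_inv_rev]
  have hWinvH : W₂⁻¹ᴴ = W₂⁻¹ := by rw [conjTranspose_nonsing_inv, hW₂.isHermitian]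
  have key : Z₁ᴴ * Z₂⁻¹ * Z₁ -
        (W₁ᴴ * W₂⁻¹ * Z₁ + Z₁ᴴ * W₂⁻¹ * W₁ - W₁ᴴ * W₂⁻¹ * Z₂ * W₂⁻¹ * W₁)
      = (S⁻¹ * Z₁ - S * (W₂⁻¹ * W₁))ᴴ * (S⁻¹ * Z₁ - S * (W₂⁻¹ * W₁)) := by
    simp only [conjTranspose_sub, conjTranspose_mul, hSinvH, hSH, hWinvH,
      Matrix.sub_mul, Matrix.mul_sub, hZinv, ← hSS]
    have h1 : Z₁ᴴ * S⁻¹ * (S * (W₂⁻¹ * W₁)) = Z₁ᴴ * W₂⁻¹ * W₁ := by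
      rw [Matrix.mul_assoc Z₁ᴴ S⁻¹, ← Matrix.mul_assoc S⁻¹ S, hSinv, Matrix.one_mul,
        ← Matrix.mul_assoc]
    have h2 : W₁ᴴ * W₂⁻¹ * S * (S⁻¹ * Z₁) = W₁ᴴ * W₂⁻¹ * Z₁ := by
      rw [Matrix.mul_assoc _ S, ← Matrix.mul_assoc S S⁻¹, hSinv', Matrix.one_mul]
    rw [h1, h2]
    have hA : Z₁ᴴ * (S * S)⁻¹ * Z₁ = Z₁ᴴ * S⁻¹ * (S⁻¹ * Z₁) := by
      simp only [Matrix.mul_inv_rev, Matrix.mul_assoc]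
    have hB : W₁ᴴ * W₂⁻¹ * (S * S) * W₂⁻¹ * W₁ = W₁ᴴ * W₂⁻¹ * S * (S * (W₂⁻¹ * W₁)) := by
      simp only [Matrix.mul_assoc]
    rw [hA, hB]
    abel
  rw [key]
  exact posSemidef_conjTranspose_mul_self _
end

section
/- Let R be an N×N Hermitian positive definite matrix, Q ∈ ℂ^{N×K}, and P > 0. Consider minimizing tr(WᴴRW) - 2·Re(tr(WᴴQ)) over W ∈ ℂ^{N×K} with ‖W‖_F² ≤ P. If ‖R⁻¹Q‖_F² ≤ P then W* = R⁻¹Q is optimal; otherwise the optimum is W* = (R + γI)⁻¹Q where γ > 0 is the unique positive solution of ‖(R + γI)⁻¹Q‖_F² = P. -/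
open Matrix
open scoped ComplexOrder

namespace Stmt11Aux

variable {N K : ℕ}

/-- Real part of the Frobenius inner product. -/
noncomputable def ip (A B : Matrix (Fin N) (Fin K) ℂ) : ℝ := (Matrix.trace (Aᴴ * B)).re

lemma ip_comm (A B : Matrix (Fin N) (Fin K) ℂ) : ip A B = ip B A := by
  unfold ip
  have h : Bᴴ * A = (Aᴴ * B)ᴴ := by simp [Matrix.conjTranspose_mul]
  rw [h, Matrix.trace_conjTranspose]
  simp [Complex.star_def]

lemma ip_add_right (A B C : Matrix (Fin N) (Fin K) ℂ) : ip A (B + C) = ip A B + ip A C := by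
  simp [ip, Matrix.mul_add]

lemma ip_sub_left (A B C : Matrix (Fin N) (Fin K) ℂ) : ip (A - B) C = ip A C - ip B C := by
  simp [ip, Matrix.sub_mul]

lemma ip_sub_right (A B C : Matrix (Fin N) (Fin K) ℂ) : ip A (B - C) = ip A B - ip A C := by
  simp [ip, Matrix.mul_sub]

lemma ip_smul_right (γ : ℝ) (A B : Matrix (Fin N) (Fin K) ℂ) :
    ip A ((γ : ℂ) • B) = γ * ip A B := by
  simp [ip, Matrix.mul_smul, Complex.re_ofReal_mul]

lemma ip_neg_neg (A B : Matrix (Fin N) (Fin K) ℂ) : ip (-A) (-B) = ip A B := by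
  simp [ip]

lemma ip_herm_comm {M : Matrix (Fin N) (Fin N) ℂ} (hM : Mᴴ = M)
    (A B : Matrix (Fin N) (Fin K) ℂ) : ip A (M * B) = ip B (M * A) := by
  unfold ip
  have h : Bᴴ * (M * A) = (Aᴴ * (M * B))ᴴ := by
    simp [Matrix.conjTranspose_mul, hM, Matrix.mul_assoc]
  rw [h, Matrix.trace_conjTranspose]
  simp [Complex.star_def]

lemma ip_self_eq (A : Matrix (Fin N) (Fin K) ℂ) :
    ip A A = ∑ j : Fin K, ∑ i : Fin N, Complex.normSq (A i j) := by
  unfold ip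
  simp only [Matrix.trace, Matrix.diag, Matrix.mul_apply, Matrix.conjTranspose_apply]
  rw [Complex.re_sum]
  refine Finset.sum_congr rfl fun j _ => ?_
  rw [Complex.re_sum]
  refine Finset.sum_congr rfl fun i _ => ?_
  simp [Complex.star_def, Complex.normSq_apply, Complex.mul_re]

lemma ip_self_nonneg (A : Matrix (Fin N) (Fin K) ℂ) : 0 ≤ ip A A := by
  rw [ip_self_eq]
  exact Finset.sum_nonneg fun j _ => Finset.sum_nonneg fun i _ => Complex.normSq_nonneg _

lemma ip_self_eq_zero {A : Matrix (Fin N) (Fin K) ℂ} (h : ip A A = 0) : A = 0 := by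
  rw [ip_self_eq] at h
  have h1 := (Finset.sum_eq_zero_iff_of_nonneg (fun j _ =>
    Finset.sum_nonneg fun i _ => Complex.normSq_nonneg _)).1 h
  ext i j
  have h2 := (Finset.sum_eq_zero_iff_of_nonneg (fun i _ =>
    Complex.normSq_nonneg (A i j))).1 (h1 j (Finset.mem_univ j)) i (Finset.mem_univ i)
  simpa using Complex.normSq_eq_zero.1 h2

lemma ip_R_nonneg {M : Matrix (Fin N) (Fin N) ℂ} (hM : M.PosSemidef)
    (A : Matrix (Fin N) (Fin K) ℂ) : 0 ≤ ip A (M * A) := by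
  open scoped MatrixOrder Matrix.Norms.L2Operator in
  obtain ⟨B, rfl⟩ := CStarAlgebra.nonneg_iff_eq_star_mul_self.mp hM.nonneg
  rw [Matrix.star_eq_conjTranspose]
  have h : Aᴴ * (Bᴴ * B * A) = (B * A)ᴴ * (B * A) := by
    simp [Matrix.conjTranspose_mul, Matrix.mul_assoc]
  have : ip A (Bᴴ * B * A) = ip (B * A) (B * A) := by unfold ip; rw [h]
  rw [this]
  exact ip_self_nonneg _

/-- Key identity. -/
lemma key (R : Matrix (Fin N) (Fin N) ℂ) (hR : Rᴴ = R) (Q Ws W : Matrix (Fin N) (Fin K) ℂ)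
    (γ : ℝ) (hQ : Q = R * Ws + (γ : ℂ) • Ws) :
    ip W (R * W) - 2 * ip W Q =
      ip Ws (R * Ws) - 2 * ip Ws Q + ip (W - Ws) (R * (W - Ws)) +
        γ * ip (W - Ws) (W - Ws) + γ * (ip Ws Ws - ip W W) := by
  have hsym : ip Ws (R * W) = ip W (R * Ws) := ip_herm_comm hR Ws W
  have hsym2 : ip Ws W = ip W Ws := ip_comm Ws W
  have h3 : ip (W - Ws) (R * (W - Ws)) =
      ip W (R * W) - ip W (R * Ws) - ip W (R * Ws) + ip Ws (R * Ws) := by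
    rw [Matrix.mul_sub, ip_sub_right, ip_sub_left, ip_sub_left, hsym]; ring
  have h4 : ip (W - Ws) (W - Ws) = ip W W - ip W Ws - ip W Ws + ip Ws Ws := by
    rw [ip_sub_right, ip_sub_left, ip_sub_left, hsym2]; ring
  rw [hQ, h3, h4, ip_add_right, ip_add_right, ip_smul_right, ip_smul_right]
  ring


lemma smulOne_psd (γ : ℝ) (hγ : 0 ≤ γ) :
    ((γ : ℂ) • (1 : Matrix (Fin N) (Fin N) ℂ)).PosSemidef := by
  refine Matrix.PosSemidef.of_dotProduct_mulVec_nonneg ?_ ?_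
  · simp [Matrix.IsHermitian, Matrix.conjTranspose_smul, Complex.star_def, Complex.conj_ofReal]
  · intro x
    have h1 : ((γ : ℂ) • (1 : Matrix (Fin N) (Fin N) ℂ)) *ᵥ x = (γ : ℂ) • x := by
      rw [Matrix.smul_mulVec, Matrix.one_mulVec]
    rw [h1]
    have h2 : star x ⬝ᵥ (γ : ℂ) • x = (γ : ℂ) * (star x ⬝ᵥ x) := by
      simp [dotProduct_smul]
    rw [h2]
    exact mul_nonneg (by exact_mod_cast Complex.zero_le_real.mpr hγ)
      (dotProduct_star_self_nonneg x)

/-- Optimality from the key identity. -/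
lemma opt (R : Matrix (Fin N) (Fin N) ℂ) (hR : R.PosDef) (Q Ws : Matrix (Fin N) (Fin K) ℂ)
    (γ P : ℝ) (hγ : 0 ≤ γ) (hQ : Q = R * Ws + (γ : ℂ) • Ws)
    (hWs : γ * (P - ip Ws Ws) = 0)
    (W : Matrix (Fin N) (Fin K) ℂ) (hW : ip W W ≤ P) :
    ip Ws (R * Ws) - 2 * ip Ws Q ≤ ip W (R * W) - 2 * ip W Q := by
  have hk := key R hR.isHermitian Q Ws W γ hQ
  have h1 := ip_R_nonneg hR.posSemidef (W - Ws)
  have h2 := ip_self_nonneg (W - Ws)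
  nlinarith [mul_nonneg hγ h2, mul_nonneg hγ (sub_nonneg.mpr hW)]

end Stmt11Aux

open Stmt11Aux

/-- KKT characterization of the beamforming subproblem: minimize
`tr(WᴴRW) - 2 Re tr(WᴴQ)` over the Frobenius ball `‖W‖_F² ≤ P`. -/
theorem stmt_11 {N K : ℕ} (R : Matrix (Fin N) (Fin N) ℂ) (hR : R.PosDef)
    (Q : Matrix (Fin N) (Fin K) ℂ) (P : ℝ) (hP : 0 < P) :
    ((Matrix.trace ((R⁻¹ * Q)ᴴ * (R⁻¹ * Q))).re ≤ P →
      ∀ W : Matrix (Fin N) (Fin K) ℂ, (Matrix.trace (Wᴴ * W)).re ≤ P →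
        (Matrix.trace ((R⁻¹ * Q)ᴴ * R * (R⁻¹ * Q))).re -
            2 * (Matrix.trace ((R⁻¹ * Q)ᴴ * Q)).re ≤
          (Matrix.trace (Wᴴ * R * W)).re - 2 * (Matrix.trace (Wᴴ * Q)).re) ∧
    (P < (Matrix.trace ((R⁻¹ * Q)ᴴ * (R⁻¹ * Q))).re →
      ∀ γ : ℝ, 0 < γ →
        (Matrix.trace (((R + (γ : ℂ) • 1)⁻¹ * Q)ᴴ * ((R + (γ : ℂ) • 1)⁻¹ * Q))).re = P →
        ((∀ W : Matrix (Fin N) (Fin K) ℂ, (Matrix.trace (Wᴴ * W)).re ≤ P →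
          (Matrix.trace (((R + (γ : ℂ) • 1)⁻¹ * Q)ᴴ * R * ((R + (γ : ℂ) • 1)⁻¹ * Q))).re -
              2 * (Matrix.trace (((R + (γ : ℂ) • 1)⁻¹ * Q)ᴴ * Q)).re ≤
            (Matrix.trace (Wᴴ * R * W)).re - 2 * (Matrix.trace (Wᴴ * Q)).re) ∧
        (∀ γ' : ℝ, 0 < γ' →
          (Matrix.trace (((R + (γ' : ℂ) • 1)⁻¹ * Q)ᴴ *
            ((R + (γ' : ℂ) • 1)⁻¹ * Q))).re = P → γ' = γ))) := by
  constructor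
  · -- unconstrained case
    intro _ W hW
    have hdet : IsUnit R.det := hR.det_pos.ne'.isUnit
    have hQeq : Q = R * (R⁻¹ * Q) + ((0 : ℝ) : ℂ) • (R⁻¹ * Q) := by
      rw [← Matrix.mul_assoc, Matrix.mul_nonsing_inv _ hdet, Matrix.one_mul]
      simp
    have h := opt R hR Q (R⁻¹ * Q) 0 P le_rfl hQeq (by ring) W hW
    unfold ip at h
    simp only [Matrix.mul_assoc]
    exact h
  · intro _ γ hγ hγP
    set S := R + (γ : ℂ) • (1 : Matrix (Fin N) (Fin N) ℂ) with hSdef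
    have hS : S.PosDef := hR.add_posSemidef (smulOne_psd γ hγ.le)
    have hSdet : IsUnit S.det := hS.det_pos.ne'.isUnit
    have hQS : S * (S⁻¹ * Q) = Q := by
      rw [← Matrix.mul_assoc, Matrix.mul_nonsing_inv _ hSdet, Matrix.one_mul]
    have hQeq : Q = R * (S⁻¹ * Q) + (γ : ℂ) • (S⁻¹ * Q) := by
      conv_lhs => rw [← hQS]
      rw [hSdef, Matrix.add_mul, Matrix.smul_mul, Matrix.one_mul]
    have hips : ip (S⁻¹ * Q) (S⁻¹ * Q) = P := hγP
    constructor
    · intro W hW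
      have h := opt R hR Q (S⁻¹ * Q) γ P hγ.le hQeq (by rw [hips]; ring) W hW
      unfold ip at h
      simp only [Matrix.mul_assoc]
      exact h
    · intro γ' hγ' hγ'P
      set S' := R + (γ' : ℂ) • (1 : Matrix (Fin N) (Fin N) ℂ) with hS'def
      have hS' : S'.PosDef := hR.add_posSemidef (smulOne_psd γ' hγ'.le)
      have hS'det : IsUnit S'.det := hS'.det_pos.ne'.isUnit
      have hQS' : S' * (S'⁻¹ * Q) = Q := by
        rw [← Matrix.mul_assoc, Matrix.mul_nonsing_inv _ hS'det, Matrix.one_mul]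
      have hQ'eq : Q = R * (S'⁻¹ * Q) + (γ' : ℂ) • (S'⁻¹ * Q) := by
        conv_lhs => rw [← hQS']
        rw [hS'def, Matrix.add_mul, Matrix.smul_mul, Matrix.one_mul]
      have hips' : ip (S'⁻¹ * Q) (S'⁻¹ * Q) = P := hγ'P
      set A := S⁻¹ * Q
      set B := S'⁻¹ * Q
      have k1 := key R hR.isHermitian Q A B γ hQeq
      have k2 := key R hR.isHermitian Q B A γ' hQ'eq
      have e1 : ip (A - B) (R * (A - B)) = ip (B - A) (R * (B - A)) := by
        have h : A - B = -(B - A) := (neg_sub B A).symm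
        rw [h, Matrix.mul_neg, ip_neg_neg]
      have e2 : ip (A - B) (A - B) = ip (B - A) (B - A) := by
        have h : A - B = -(B - A) := (neg_sub B A).symm
        rw [h, ip_neg_neg]
      rw [e1, e2] at k2
      have h1 := ip_R_nonneg hR.posSemidef (B - A)
      have h2 := ip_self_nonneg (B - A)
      have hΔ0 : ip (B - A) (B - A) = 0 := by nlinarith
      have hBA : B = A := by
        have := sub_eq_zero.mp (ip_self_eq_zero hΔ0)
        exact this
      have hAne : A ≠ 0 := by
        intro h
        rw [h] at hips
        unfold ip at hips
        simp at hips
        exact hP.ne' hips.symm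
      have hSA : S' * A = S * A :=
        calc S' * A = S' * B := by rw [hBA]
          _ = Q := hQS'
          _ = S * A := hQS.symm
      have hsm : (γ' : ℂ) • A = (γ : ℂ) • A := by
        have := hSA
        rw [hSdef, hS'def, Matrix.add_mul, Matrix.add_mul, Matrix.smul_mul, Matrix.smul_mul,
          Matrix.one_mul] at this
        exact add_left_cancel this
      have : ((γ' : ℂ) - γ) • A = 0 := by rw [sub_smul, hsm, sub_self]
      rcases smul_eq_zero.mp this with h | h
      · have : (γ' : ℂ) = γ := sub_eq_zero.mp h
        exact_mod_cast this
      · exact absurd h hAne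
end

section
/- Let R be Hermitian positive semidefinite with R ⪯ λI for some λ > 0, and Q ∈ ℂ^{N×K}. The function W ↦ tr(WᴴRW) - 2·Re(tr(WᴴQ)) is majorized at W₀ by W ↦ λ‖W - Π‖_F² + c, where Π = (Q - (R - λI)W₀)/λ and c is a constant independent of W; moreover the minimizer of ‖W - Π‖_F² over {W : ‖W‖_F² ≤ P} is Π if ‖Π‖_F² ≤ P and √(P/‖Π‖_F²)·Π otherwise. -/
open Matrix
open scoped ComplexOrder

lemma psd_trace_re_nonneg {n : Type*} [Fintype n] [DecidableEq n] {A : Matrix n n ℂ}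
    (hA : A.PosSemidef) : 0 ≤ A.trace.re := by
  have h : (0:ℂ) ≤ A.trace := by
    rw [Matrix.trace]
    apply Finset.sum_nonneg
    intro i _
    exact hA.diag_nonneg
  exact (Complex.le_def.mp h).1

noncomputable def ip {N K : ℕ} (X Y : Matrix (Fin N) (Fin K) ℂ) : ℝ :=
  (Matrix.trace (Xᴴ * Y)).re

lemma ip_self_nonneg {N K : ℕ} (X : Matrix (Fin N) (Fin K) ℂ) : 0 ≤ ip X X :=
  psd_trace_re_nonneg (Matrix.posSemidef_conjTranspose_mul_self X)

lemma ip_comm {N K : ℕ} (X Y : Matrix (Fin N) (Fin K) ℂ) : ip X Y = ip Y X := by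
  unfold ip
  rw [show Yᴴ * X = (Xᴴ * Y)ᴴ by simp [Matrix.conjTranspose_mul], Matrix.trace_conjTranspose]
  simp

lemma ip_sub_left {N K : ℕ} (X Y Z : Matrix (Fin N) (Fin K) ℂ) :
    ip (X - Y) Z = ip X Z - ip Y Z := by
  simp [ip, Matrix.conjTranspose_sub, Matrix.sub_mul]

lemma ip_sub_right {N K : ℕ} (X Y Z : Matrix (Fin N) (Fin K) ℂ) :
    ip X (Y - Z) = ip X Y - ip X Z := by
  simp [ip, Matrix.mul_sub]

lemma ip_smul_left {N K : ℕ} (r : ℝ) (X Y : Matrix (Fin N) (Fin K) ℂ) :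
    ip ((r:ℂ) • X) Y = r * ip X Y := by
  simp [ip, Matrix.conjTranspose_smul, Matrix.smul_mul, Complex.re_ofReal_mul]

lemma ip_smul_right {N K : ℕ} (r : ℝ) (X Y : Matrix (Fin N) (Fin K) ℂ) :
    ip X ((r:ℂ) • Y) = r * ip X Y := by
  simp [ip, Matrix.mul_smul, Complex.re_ofReal_mul]

lemma ip_expand {N K : ℕ} (X Y : Matrix (Fin N) (Fin K) ℂ) :
    ip (X - Y) (X - Y) = ip X X - 2 * ip X Y + ip Y Y := by
  rw [ip_sub_left, ip_sub_right, ip_sub_right, ip_comm Y X]; ring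

lemma ip_cs {N K : ℕ} (X Y : Matrix (Fin N) (Fin K) ℂ) (hY : 0 < ip Y Y) :
    (ip X Y)^2 ≤ ip X X * ip Y Y := by
  have h := ip_self_nonneg (X - ((ip X Y / ip Y Y : ℝ):ℂ) • Y)
  rw [ip_expand, ip_smul_right, ip_smul_left, ip_smul_right] at h
  have hne := hY.ne'
  have h2 : 0 ≤ ip X X - ip X Y ^ 2 / ip Y Y := by
    have h4 : ip X Y / ip Y Y * ip X Y = ip X Y ^ 2 / ip Y Y := by field_simp
    have h5 : ip X Y / ip Y Y * (ip X Y / ip Y Y * ip Y Y) = ip X Y ^ 2 / ip Y Y := by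
      field_simp
    rw [h4, h5] at h
    linarith
  have h3 := (div_le_iff₀ hY).mp (by linarith : ip X Y ^ 2 / ip Y Y ≤ ip X X)
  linarith

lemma main_id {N K : ℕ} (R : Matrix (Fin N) (Fin N) ℂ) (hR : R.IsHermitian)
    (lam : ℝ) (Q W₀ W Pi : Matrix (Fin N) (Fin K) ℂ)
    (hPi : (lam:ℂ) • Pi = Q - (R - (lam : ℂ) • 1) * W₀) :
    (lam:ℂ) * Matrix.trace ((W - Pi)ᴴ * (W - Pi))
      + Matrix.trace (W₀ᴴ * ((lam:ℂ) • 1 - R) * W₀)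
      - (lam:ℂ) * Matrix.trace (Piᴴ * Pi)
      - Matrix.trace (Wᴴ * R * W) + Matrix.trace (Wᴴ * Q) + Matrix.trace (Qᴴ * W)
    = Matrix.trace ((W - W₀)ᴴ * ((lam:ℂ) • 1 - R) * (W - W₀)) := by
  have h1 : (lam:ℂ) * Matrix.trace ((W - Pi)ᴴ * (W - Pi)) - (lam:ℂ) * Matrix.trace (Piᴴ * Pi)
      = (lam:ℂ) * Matrix.trace (Wᴴ * W)
        - Matrix.trace (Wᴴ * (Q - (R - (lam : ℂ) • 1) * W₀))
        - Matrix.trace ((Q - (R - (lam : ℂ) • 1) * W₀)ᴴ * W) := by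
    rw [← hPi]
    simp only [Matrix.conjTranspose_sub, Matrix.conjTranspose_smul, Matrix.sub_mul,
      Matrix.mul_sub, Matrix.trace_sub, Matrix.smul_mul, Matrix.mul_smul, Matrix.trace_smul,
      smul_eq_mul, Complex.star_def, Complex.conj_ofReal]
    ring
  have h2 : (lam:ℂ) * Matrix.trace (Wᴴ * W)
        - Matrix.trace (Wᴴ * (Q - (R - (lam : ℂ) • 1) * W₀))
        - Matrix.trace ((Q - (R - (lam : ℂ) • 1) * W₀)ᴴ * W)
        + Matrix.trace (W₀ᴴ * ((lam:ℂ) • 1 - R) * W₀)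
        - Matrix.trace (Wᴴ * R * W) + Matrix.trace (Wᴴ * Q) + Matrix.trace (Qᴴ * W)
      = Matrix.trace ((W - W₀)ᴴ * ((lam:ℂ) • 1 - R) * (W - W₀)) := by
    simp only [Matrix.conjTranspose_sub, Matrix.conjTranspose_smul, Matrix.conjTranspose_mul,
      Matrix.conjTranspose_one, hR.eq, Matrix.sub_mul, Matrix.mul_sub, Matrix.smul_mul,
      Matrix.mul_smul, Matrix.one_mul, Matrix.mul_one, Matrix.mul_assoc, Matrix.trace_sub,
      Matrix.trace_add, Matrix.trace_smul, smul_eq_mul, Complex.star_def, Complex.conj_ofReal]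
    ring
  linear_combination h1 + h2

lemma num_ineq (P s a b : ℝ) (hP : 0 < P) (hs : P < s) (ha0 : 0 ≤ a) (haP : a ≤ P)
    (hcs : b ^ 2 ≤ a * s) :
    P - 2 * Real.sqrt (P * s) + s ≤ a - 2 * b + s := by
  have hs0 : 0 < s := lt_trans hP hs
  set u : ℝ := Real.sqrt a with hudef
  set v : ℝ := Real.sqrt P with hvdef
  set w : ℝ := Real.sqrt s with hwdef
  have hu2 : u * u = a := Real.mul_self_sqrt ha0
  have hv2 : v * v = P := Real.mul_self_sqrt hP.le
  have hw2 : w * w = s := Real.mul_self_sqrt hs0.le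
  have huv : u ≤ v := Real.sqrt_le_sqrt haP
  have hvw : v ≤ w := Real.sqrt_le_sqrt (le_of_lt hs)
  have hq : Real.sqrt (P * s) = v * w := Real.sqrt_mul hP.le s
  have hbuw : b ≤ u * w := by
    have h1 : b ≤ |b| := le_abs_self b
    have h2 : |b| = Real.sqrt (b ^ 2) := (Real.sqrt_sq_eq_abs b).symm
    have h3 : Real.sqrt (b ^ 2) ≤ Real.sqrt (a * s) := Real.sqrt_le_sqrt hcs
    have h4 : Real.sqrt (a * s) = u * w := Real.sqrt_mul ha0 s
    calc b ≤ |b| := h1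
    _ = Real.sqrt (b ^ 2) := h2
    _ ≤ Real.sqrt (a * s) := h3
    _ = u * w := h4
  have hu0 : 0 ≤ u := Real.sqrt_nonneg a
  have hw0 : 0 ≤ w := Real.sqrt_nonneg s
  rw [hq]
  nlinarith [mul_nonneg (sub_nonneg.mpr huv) (sub_nonneg.mpr (by linarith : u + v ≤ 2 * w))]

/-- Further majorization of the quadratic beamforming objective by
`λ‖W - Pi0‖_F² + c` with `Pi0 = (Q - (R - λI)W₀)/λ`, tight at `W₀`; and the
minimizer of `‖W - Pi0‖_F²` over the Frobenius ball is the projection of `Pi0`. -/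
theorem stmt_13 {N K : ℕ} (R : Matrix (Fin N) (Fin N) ℂ) (hR : R.PosSemidef)
    (lam : ℝ) (hlam : 0 < lam)
    (hRlam : ((lam : ℂ) • (1 : Matrix (Fin N) (Fin N) ℂ) - R).PosSemidef)
    (Q W₀ : Matrix (Fin N) (Fin K) ℂ) (P : ℝ) (hP : 0 < P) :
    ∃ c : ℝ,
      (∀ W : Matrix (Fin N) (Fin K) ℂ,
        (Matrix.trace (Wᴴ * R * W)).re - 2 * (Matrix.trace (Wᴴ * Q)).re ≤
          lam * (Matrix.trace
            ((W - (lam : ℂ)⁻¹ • (Q - (R - (lam : ℂ) • 1) * W₀))ᴴ *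
              (W - (lam : ℂ)⁻¹ • (Q - (R - (lam : ℂ) • 1) * W₀)))).re + c) ∧
      ((Matrix.trace (W₀ᴴ * R * W₀)).re - 2 * (Matrix.trace (W₀ᴴ * Q)).re =
        lam * (Matrix.trace
          ((W₀ - (lam : ℂ)⁻¹ • (Q - (R - (lam : ℂ) • 1) * W₀))ᴴ *
            (W₀ - (lam : ℂ)⁻¹ • (Q - (R - (lam : ℂ) • 1) * W₀)))).re + c) ∧
      (∀ Pi0 : Matrix (Fin N) (Fin K) ℂ,
        Pi0 = (lam : ℂ)⁻¹ • (Q - (R - (lam : ℂ) • 1) * W₀) →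
        ((Matrix.trace (Pi0ᴴ * Pi0)).re ≤ P →
          ∀ W : Matrix (Fin N) (Fin K) ℂ, (Matrix.trace (Wᴴ * W)).re ≤ P →
            (Matrix.trace ((Pi0 - Pi0)ᴴ * (Pi0 - Pi0))).re ≤
              (Matrix.trace ((W - Pi0)ᴴ * (W - Pi0))).re) ∧
        (P < (Matrix.trace (Pi0ᴴ * Pi0)).re →
          ∀ W : Matrix (Fin N) (Fin K) ℂ, (Matrix.trace (Wᴴ * W)).re ≤ P →
            (Matrix.trace
              ((((Real.sqrt (P / (Matrix.trace (Pi0ᴴ * Pi0)).re) : ℂ) • Pi0 - Pi0)ᴴ *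
                ((Real.sqrt (P / (Matrix.trace (Pi0ᴴ * Pi0)).re) : ℂ) • Pi0 - Pi0)))).re ≤
              (Matrix.trace ((W - Pi0)ᴴ * (W - Pi0))).re)) := by
  have hne : (lam:ℂ) ≠ 0 := by
    exact_mod_cast Complex.ofReal_ne_zero.mpr hlam.ne'
  set A : Matrix (Fin N) (Fin N) ℂ := (lam:ℂ) • 1 - R with hA
  set Pi : Matrix (Fin N) (Fin K) ℂ := (lam : ℂ)⁻¹ • (Q - (R - (lam : ℂ) • 1) * W₀) with hPidef
  have hPi : (lam:ℂ) • Pi = Q - (R - (lam : ℂ) • 1) * W₀ := by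
    rw [hPidef, smul_smul, mul_inv_cancel₀ hne, one_smul]
  refine ⟨(Matrix.trace (W₀ᴴ * A * W₀)).re - lam * (Matrix.trace (Piᴴ * Pi)).re, ?_, ?_, ?_⟩
  · intro W
    have key := main_id R hR.1 lam Q W₀ W Pi hPi
    have hQW : (Matrix.trace (Qᴴ * W)).re = (Matrix.trace (Wᴴ * Q)).re := by
      rw [show Qᴴ * W = (Wᴴ * Q)ᴴ by simp [Matrix.conjTranspose_mul],
        Matrix.trace_conjTranspose]
      simp
    have keyre := congrArg Complex.re key
    simp only [Complex.add_re, Complex.sub_re, Complex.re_ofReal_mul, hQW] at keyre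
    have hpsd : 0 ≤ (Matrix.trace ((W - W₀)ᴴ * A * (W - W₀))).re :=
      psd_trace_re_nonneg (hRlam.conjTranspose_mul_mul_same (W - W₀))
    rw [hA] at hpsd
    linarith [keyre, hpsd]
  · have key := main_id R hR.1 lam Q W₀ W₀ Pi hPi
    have hQW : (Matrix.trace (Qᴴ * W₀)).re = (Matrix.trace (W₀ᴴ * Q)).re := by
      rw [show Qᴴ * W₀ = (W₀ᴴ * Q)ᴴ by simp [Matrix.conjTranspose_mul],
        Matrix.trace_conjTranspose]
      simp
    have keyre := congrArg Complex.re key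
    rw [sub_self] at keyre
    simp only [Complex.add_re, Complex.sub_re, Complex.re_ofReal_mul, hQW,
      Matrix.zero_mul, Matrix.mul_zero, Matrix.conjTranspose_zero, Matrix.trace_zero,
      Complex.zero_re] at keyre
    linarith [keyre]
  · intro Pi0 _
    constructor
    · intro _ W _
      rw [sub_self]
      simp only [Matrix.conjTranspose_zero, Matrix.mul_zero, Matrix.trace_zero, Complex.zero_re]
      exact ip_self_nonneg (W - Pi0)
    · intro hgt W hW
      have hs : P < ip Pi0 Pi0 := hgt
      have hWle : ip W W ≤ P := hW
      have hs0 : 0 < ip Pi0 Pi0 := lt_trans hP hs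
      set s : ℝ := ip Pi0 Pi0 with hsdef
      set t : ℝ := Real.sqrt (P / s) with htdef
      have hchange : (Matrix.trace
            ((((Real.sqrt (P / (Matrix.trace (Pi0ᴴ * Pi0)).re) : ℂ) • Pi0 - Pi0)ᴴ *
              ((Real.sqrt (P / (Matrix.trace (Pi0ᴴ * Pi0)).re) : ℂ) • Pi0 - Pi0)))).re
          = ip ((t:ℂ) • Pi0 - Pi0) ((t:ℂ) • Pi0 - Pi0) := rfl
      rw [hchange]
      have hrhs : (Matrix.trace ((W - Pi0)ᴴ * (W - Pi0))).re = ip (W - Pi0) (W - Pi0) := rfl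
      rw [hrhs]
      have eLHS : ip ((t:ℂ) • Pi0 - Pi0) ((t:ℂ) • Pi0 - Pi0) = t * (t * s) - 2 * (t * s) + s := by
        rw [ip_expand, ip_smul_left, ip_smul_right, ip_smul_left]
      have ht2 : t * t = P / s := by
        rw [htdef]; exact Real.mul_self_sqrt (div_nonneg hP.le hs0.le)
      have hts : t * s = Real.sqrt (P * s) := by
        have h6 : Real.sqrt (P * s) = Real.sqrt (P / s) * Real.sqrt (s ^ 2) := by
          rw [← Real.sqrt_mul (div_nonneg hP.le hs0.le)]
          congr 1
          field_simp
        rw [htdef, h6, Real.sqrt_sq hs0.le]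
      have hLHS : ip ((t:ℂ) • Pi0 - Pi0) ((t:ℂ) • Pi0 - Pi0) = P - 2 * Real.sqrt (P * s) + s := by
        rw [eLHS, ← mul_assoc, ht2, hts, div_mul_cancel₀ _ hs0.ne']
      rw [hLHS, ip_expand]
      exact num_ineq P s (ip W W) (ip W Pi0) hP hs (ip_self_nonneg W) hWle (ip_cs W Pi0 hs0)
end
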